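/- Let u' be an odometer on the integer interval [a,b] (vanishing outside [a,b]) that is weakly stable on [a,b] for a given initial configuration σ with no sleeping particles. Then the number of particles left on [a,b] by u', namely Σ_{v=a}^b h(v), equals Σ_{v=a}^b |σ(v)| − L_{u'}(a) − R_{u'}(b), and moreover the true odometer stabilizing [a,b] leaves at least as many particles on [a,b] as u' does. -/

import Mathlib

/-- ARW instructions. -/
inductive Instr : Type
  | left
  | right
  | sleep
deriving DecidableEq

/-- The state of a single site: a sleeping particle, or `n` active particles. -/
inductive SiteState : Type
  | sleeping
  | active (n : ℕ)
deriving DecidableEq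

/-- Adding one (active) particle to a site. -/
def addP : SiteState → SiteState
  | SiteState.sleeping => SiteState.active 2
  | SiteState.active n => SiteState.active (n + 1)

/-- Removing one particle from a site (only meaningful for active sites). -/
def removeP : SiteState → SiteState
  | SiteState.sleeping => SiteState.sleeping
  | SiteState.active n => SiteState.active (n - 1)

/-- The effect of executing instruction `ins` at site `v` on the configuration. -/
def applyInstr (c : ℤ → SiteState) (v : ℤ) : Instr → (ℤ → SiteState)
  | Instr.left => fun w =>
      if w = v then removeP (c v) else if w = v - 1 then addP (c w) else c w
  | Instr.right => fun w =>
      if w = v then removeP (c v) else if w = v + 1 then addP (c w) else c w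
  | Instr.sleep => fun w =>
      if w = v then (if c v = SiteState.active 1 then SiteState.sleeping else c v)
      else c w

/-- Running a toppling sequence (a list of sites) from a configuration and an
odometer: each toppling at `v` executes the next unexecuted instruction at `v`
and increments the odometer there. -/
def run (instr : ℤ → ℕ → Instr) :
    List ℤ → (ℤ → SiteState) × (ℤ → ℕ) → (ℤ → SiteState) × (ℤ → ℕ)
  | [], p => p
  | v :: l, p =>
      run instr l
        (applyInstr p.1 v (instr v (p.2 v + 1)), Function.update p.2 v (p.2 v + 1))

/-- A toppling sequence is legal if each toppled site has at least one active
particle at the time it is toppled. -/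
def Legal (instr : ℤ → ℕ → Instr) :
    List ℤ → (ℤ → SiteState) × (ℤ → ℕ) → Prop
  | [], _ => True
  | v :: l, p => (∃ m : ℕ, p.1 v = SiteState.active (m + 1)) ∧
      Legal instr l
        (applyInstr p.1 v (instr v (p.2 v + 1)), Function.update p.2 v (p.2 v + 1))

/-- A configuration is stable on `V` if every site of `V` holds either a single
sleeping particle or no particle. -/
def StableOn (c : ℤ → SiteState) (V : Finset ℤ) : Prop :=
  ∀ v ∈ V, c v = SiteState.sleeping ∨ c v = SiteState.active 0

/-- The number of `left` instructions among the first `u v` instructions at `v`. -/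
def Lcount (instr : ℤ → ℕ → Instr) (u : ℤ → ℕ) (v : ℤ) : ℕ :=
  ((Finset.Icc 1 (u v)).filter fun i => instr v i = Instr.left).card

/-- The number of `right` instructions among the first `u v` instructions at `v`. -/
def Rcount (instr : ℤ → ℕ → Instr) (u : ℤ → ℕ) (v : ℤ) : ℕ :=
  ((Finset.Icc 1 (u v)).filter fun i => instr v i = Instr.right).card

/-- The number of particles left at `v` by the odometer `u`, starting from the
all-active configuration `σ`. -/
def height (instr : ℤ → ℕ → Instr) (σ : ℤ → ℕ) (u : ℤ → ℕ) (v : ℤ) : ℤ :=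
  (σ v : ℤ) + (Rcount instr u (v - 1) : ℤ) + (Lcount instr u (v + 1) : ℤ)
    - (Lcount instr u v : ℤ) - (Rcount instr u v : ℤ)

/-- Weak stability of the odometer `u` at `v`. -/
def WeaklyStableAt (instr : ℤ → ℕ → Instr) (σ : ℤ → ℕ) (u : ℤ → ℕ) (v : ℤ) : Prop :=
  (height instr σ u v = 0 ∨ height instr σ u v = 1) ∧
    (height instr σ u v = 1 → instr v (u v) = Instr.sleep)


section Helpers

variable (instr : ℤ → ℕ → Instr) (σ : ℤ → ℕ)

lemma Lcount_update_ne (w : ℤ → ℕ) (v0 : ℤ) (k : ℕ) {v : ℤ} (h : v ≠ v0) :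
    Lcount instr (Function.update w v0 k) v = Lcount instr w v := by
  simp [Lcount, Function.update_of_ne h]

lemma Rcount_update_ne (w : ℤ → ℕ) (v0 : ℤ) (k : ℕ) {v : ℤ} (h : v ≠ v0) :
    Rcount instr (Function.update w v0 k) v = Rcount instr w v := by
  simp [Rcount, Function.update_of_ne h]

lemma Icc_succ_insert (n : ℕ) : Finset.Icc 1 (n + 1) = insert (n + 1) (Finset.Icc 1 n) := by
  ext i; simp only [Finset.mem_Icc, Finset.mem_insert]; omega

lemma Lcount_update_same (w : ℤ → ℕ) (v0 : ℤ) :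
    Lcount instr (Function.update w v0 (w v0 + 1)) v0 =
      Lcount instr w v0 + (if instr v0 (w v0 + 1) = Instr.left then 1 else 0) := by
  unfold Lcount
  rw [Function.update_self, Icc_succ_insert, Finset.filter_insert]
  have hnm : (w v0 + 1) ∉ (Finset.Icc 1 (w v0)).filter fun i => instr v0 i = Instr.left := by
    simp only [Finset.mem_filter, Finset.mem_Icc]; omega
  split <;> simp [Finset.card_insert_of_notMem hnm]

lemma Rcount_update_same (w : ℤ → ℕ) (v0 : ℤ) :
    Rcount instr (Function.update w v0 (w v0 + 1)) v0 =
      Rcount instr w v0 + (if instr v0 (w v0 + 1) = Instr.right then 1 else 0) := by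
  unfold Rcount
  rw [Function.update_self, Icc_succ_insert, Finset.filter_insert]
  have hnm : (w v0 + 1) ∉ (Finset.Icc 1 (w v0)).filter fun i => instr v0 i = Instr.right := by
    simp only [Finset.mem_filter, Finset.mem_Icc]; omega
  split <;> simp [Finset.card_insert_of_notMem hnm]

lemma Lcount_mono {u w : ℤ → ℕ} (v : ℤ) (h : u v ≤ w v) :
    Lcount instr u v ≤ Lcount instr w v := by
  apply Finset.card_le_card
  exact Finset.filter_subset_filter _ (Finset.Icc_subset_Icc_right h)

lemma Rcount_mono {u w : ℤ → ℕ} (v : ℤ) (h : u v ≤ w v) :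
    Rcount instr u v ≤ Rcount instr w v := by
  apply Finset.card_le_card
  exact Finset.filter_subset_filter _ (Finset.Icc_subset_Icc_right h)

lemma Lcount_zero {u : ℤ → ℕ} {v : ℤ} (h : u v = 0) : Lcount instr u v = 0 := by
  simp [Lcount, h]

lemma Rcount_zero {u : ℤ → ℕ} {v : ℤ} (h : u v = 0) : Rcount instr u v = 0 := by
  simp [Rcount, h]

lemma height_update_self (w : ℤ → ℕ) (v0 : ℤ) :
    height instr σ (Function.update w v0 (w v0 + 1)) v0 =
      height instr σ w v0 - (if instr v0 (w v0 + 1) = Instr.left then 1 else 0)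
        - (if instr v0 (w v0 + 1) = Instr.right then 1 else 0) := by
  unfold height
  rw [Lcount_update_same, Rcount_update_same,
    Lcount_update_ne instr w v0 _ (by omega), Rcount_update_ne instr w v0 _ (by omega)]
  push_cast; split <;> split <;> ring

lemma height_update_left (w : ℤ → ℕ) (v0 : ℤ) :
    height instr σ (Function.update w v0 (w v0 + 1)) (v0 - 1) =
      height instr σ w (v0 - 1) + (if instr v0 (w v0 + 1) = Instr.left then 1 else 0) := by
  unfold height
  have h1 : v0 - 1 + 1 = v0 := by ring
  rw [h1, Lcount_update_same,
    Lcount_update_ne instr w v0 _ (show v0 - 1 ≠ v0 by omega),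
    Rcount_update_ne instr w v0 _ (show v0 - 1 ≠ v0 by omega),
    Rcount_update_ne instr w v0 _ (show v0 - 1 - 1 ≠ v0 by omega)]
  push_cast; split <;> ring

lemma height_update_right (w : ℤ → ℕ) (v0 : ℤ) :
    height instr σ (Function.update w v0 (w v0 + 1)) (v0 + 1) =
      height instr σ w (v0 + 1) + (if instr v0 (w v0 + 1) = Instr.right then 1 else 0) := by
  unfold height
  have h1 : v0 + 1 - 1 = v0 := by ring
  rw [h1, Rcount_update_same,
    Lcount_update_ne instr w v0 _ (show v0 + 1 ≠ v0 by omega),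
    Rcount_update_ne instr w v0 _ (show v0 + 1 ≠ v0 by omega),
    Lcount_update_ne instr w v0 _ (show v0 + 1 + 1 ≠ v0 by omega)]
  push_cast; split <;> ring

lemma height_update_other (w : ℤ → ℕ) (v0 : ℤ) {v : ℤ} (h1 : v ≠ v0 - 1) (h2 : v ≠ v0)
    (h3 : v ≠ v0 + 1) :
    height instr σ (Function.update w v0 (w v0 + 1)) v = height instr σ w v := by
  unfold height
  rw [Lcount_update_ne instr w v0 _ h2, Rcount_update_ne instr w v0 _ h2,
    Rcount_update_ne instr w v0 _ (show v - 1 ≠ v0 by omega),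
    Lcount_update_ne instr w v0 _ (show v + 1 ≠ v0 by omega)]

/-- The invariant relating a configuration to its odometer. -/
def ConfInv (c : ℤ → SiteState) (w : ℤ → ℕ) : Prop :=
  ∀ v : ℤ,
    ((instr v (w v) = Instr.sleep ∧ height instr σ w v = 1) → c v = SiteState.sleeping) ∧
    (¬(instr v (w v) = Instr.sleep ∧ height instr σ w v = 1) →
      c v = SiteState.active (height instr σ w v).toNat ∧ 0 ≤ height instr σ w v) ∧
    (instr v (w v) = Instr.sleep → 1 ≤ height instr σ w v)

lemma height_legal (c : ℤ → SiteState) (w : ℤ → ℕ) (hInv : ConfInv instr σ c w) (v0 : ℤ) (m : ℕ)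
    (hc : c v0 = SiteState.active (m + 1)) : height instr σ w v0 = (m : ℤ) + 1 := by
  obtain ⟨hs, hn, _⟩ := hInv v0
  have hcond : ¬(instr v0 (w v0) = Instr.sleep ∧ height instr σ w v0 = 1) := by
    intro h; rw [hs h] at hc; exact SiteState.noConfusion hc
  obtain ⟨h1, h2⟩ := hn hcond
  rw [hc] at h1
  have := SiteState.active.inj h1
  omega

lemma inv_step (c : ℤ → SiteState) (w : ℤ → ℕ) (v0 : ℤ) (hInv : ConfInv instr σ c w) (m : ℕ)
    (hc : c v0 = SiteState.active (m + 1)) :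
    ConfInv instr σ (applyInstr c v0 (instr v0 (w v0 + 1))) (Function.update w v0 (w v0 + 1)) := by
  have hh0 : height instr σ w v0 = (m : ℤ) + 1 := height_legal instr σ c w hInv v0 m hc
  intro v
  by_cases hv : v = v0
  · subst hv
    rw [Function.update_self, height_update_self instr σ w v]
    cases hins : instr v (w v + 1) with
    | left =>
        have hca : applyInstr c v Instr.left v = SiteState.active m := by
          simp [applyInstr, hc, removeP]
        rw [hh0, hca]
        simp only [reduceCtorEq, reduceIte]
        refine ⟨by simp, fun _ => ⟨?_, by omega⟩, by simp⟩
        congr 1; omega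
    | right =>
        have hca : applyInstr c v Instr.right v = SiteState.active m := by
          simp [applyInstr, hc, removeP]
        rw [hh0, hca]
        simp only [reduceCtorEq, reduceIte]
        refine ⟨by simp, fun _ => ⟨?_, by omega⟩, by simp⟩
        congr 1; omega
    | sleep =>
        rw [hh0]
        simp only [reduceCtorEq, reduceIte, sub_zero]
        by_cases hm1 : m = 0
        · subst hm1
          have hca : applyInstr c v Instr.sleep v = SiteState.sleeping := by
            simp [applyInstr, hc]
          exact ⟨fun _ => hca, fun hcon => absurd ⟨by trivial, by omega⟩ hcon,
            fun _ => by omega⟩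
        · have hne : c v ≠ SiteState.active 1 := by
            rw [hc]; intro h; injection h with h'; omega
          have hca : applyInstr c v Instr.sleep v = c v := by
            simp [applyInstr, hne]
          refine ⟨fun h => absurd h.2 (by omega), fun _ => ⟨?_, by omega⟩,
            fun _ => by omega⟩
          rw [hca, hc]
          have hT : ((m : ℤ) + 1).toNat = m + 1 := by omega
          rw [hT]
  · -- v ≠ v0 : odometer at v unchanged, instruction pointer unchanged
    have hw : Function.update w v0 (w v0 + 1) v = w v := Function.update_of_ne hv _ _
    rw [hw]
    obtain ⟨hs, hn, hsl⟩ := hInv v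
    by_cases hvl : v = v0 - 1
    · subst hvl
      rw [height_update_left instr σ w v0]
      cases hins : instr v0 (w v0 + 1) with
      | left =>
          have hca : applyInstr c v0 Instr.left (v0 - 1) = addP (c (v0 - 1)) := by
            simp only [applyInstr]
            rw [if_neg (show v0 - 1 ≠ v0 by omega)]
            simp
          rw [hca]
          simp only [reduceCtorEq, reduceIte]
          refine ⟨fun h => ?_, fun h => ?_, fun h => ?_⟩
          · exfalso
            have := hsl h.1
            omega
          · by_cases hold : instr (v0-1) (w (v0-1)) = Instr.sleep ∧ height instr σ w (v0-1) = 1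
            · rw [hs hold]
              refine ⟨?_, by omega⟩
              simp only [addP]
              congr 1; omega
            · obtain ⟨h1, h2⟩ := hn hold
              rw [h1]
              refine ⟨?_, by omega⟩
              simp only [addP]
              congr 1; omega
          · have := hsl h; omega
      | right =>
          have hca : applyInstr c v0 Instr.right (v0 - 1) = c (v0 - 1) := by
            simp only [applyInstr]
            rw [if_neg (show v0 - 1 ≠ v0 by omega), if_neg (show v0 - 1 ≠ v0 + 1 by omega)]
          rw [hca]
          simp only [reduceCtorEq, reduceIte, add_zero]
          exact ⟨hs, hn, hsl⟩
      | sleep =>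
          have hca : applyInstr c v0 Instr.sleep (v0 - 1) = c (v0 - 1) := by
            simp only [applyInstr]
            rw [if_neg (show v0 - 1 ≠ v0 by omega)]
          rw [hca]
          simp only [reduceCtorEq, reduceIte, add_zero]
          exact ⟨hs, hn, hsl⟩
    · by_cases hvr : v = v0 + 1
      · subst hvr
        rw [height_update_right instr σ w v0]
        cases hins : instr v0 (w v0 + 1) with
        | right =>
            have hca : applyInstr c v0 Instr.right (v0 + 1) = addP (c (v0 + 1)) := by
              simp only [applyInstr]
              rw [if_neg (show v0 + 1 ≠ v0 by omega)]
              simp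
            rw [hca]
            simp only [reduceCtorEq, reduceIte]
            refine ⟨fun h => ?_, fun h => ?_, fun h => ?_⟩
            · exfalso
              have := hsl h.1
              omega
            · by_cases hold : instr (v0+1) (w (v0+1)) = Instr.sleep ∧
                  height instr σ w (v0+1) = 1
              · rw [hs hold]
                refine ⟨?_, by omega⟩
                simp only [addP]
                congr 1; omega
              · obtain ⟨h1, h2⟩ := hn hold
                rw [h1]
                refine ⟨?_, by omega⟩
                simp only [addP]
                congr 1; omega
            · have := hsl h; omega
        | left =>
            have hca : applyInstr c v0 Instr.left (v0 + 1) = c (v0 + 1) := by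
              simp only [applyInstr]
              rw [if_neg (show v0 + 1 ≠ v0 by omega), if_neg (show v0 + 1 ≠ v0 - 1 by omega)]
            rw [hca]
            simp only [reduceCtorEq, reduceIte, add_zero]
            exact ⟨hs, hn, hsl⟩
        | sleep =>
            have hca : applyInstr c v0 Instr.sleep (v0 + 1) = c (v0 + 1) := by
              simp only [applyInstr]
              rw [if_neg (show v0 + 1 ≠ v0 by omega)]
            rw [hca]
            simp only [reduceCtorEq, reduceIte, add_zero]
            exact ⟨hs, hn, hsl⟩
      · rw [height_update_other instr σ w v0 hvl hv hvr]
        have hca : applyInstr c v0 (instr v0 (w v0 + 1)) v = c v := by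
          cases instr v0 (w v0 + 1) <;> simp only [applyInstr] <;>
            rw [if_neg hv] <;> first | rw [if_neg (by omega)] | rfl
        rw [hca]
        exact ⟨hs, hn, hsl⟩

lemma run_le (u' : ℤ → ℕ) (a b : ℤ)
    (hws : ∀ v ∈ Finset.Icc a b, WeaklyStableAt instr σ u' v) :
    ∀ (l : List ℤ) (c : ℤ → SiteState) (w : ℤ → ℕ), ConfInv instr σ c w →
      (∀ v, w v ≤ u' v) → (∀ v ∈ l, v ∈ Finset.Icc a b) → Legal instr l (c, w) →
      ∀ v, (run instr l (c, w)).2 v ≤ u' v := by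
  intro l
  induction l with
  | nil => intro c w _ hle _ _ v; exact hle v
  | cons v0 l ih =>
    intro c w hInv hle hmem hlegal v
    obtain ⟨⟨m, hc0⟩, hlegal'⟩ := hlegal
    have hc : c v0 = SiteState.active (m + 1) := hc0
    have hh0 : height instr σ w v0 = (m : ℤ) + 1 := height_legal instr σ c w hInv v0 m hc
    have hkey : w v0 < u' v0 := by
      rcases lt_or_eq_of_le (hle v0) with h | heq
      · exact h
      · exfalso
        have hL : Lcount instr w v0 = Lcount instr u' v0 := by simp [Lcount, heq]
        have hR : Rcount instr w v0 = Rcount instr u' v0 := by simp [Rcount, heq]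
        have hRm : Rcount instr w (v0 - 1) ≤ Rcount instr u' (v0 - 1) :=
          Rcount_mono instr _ (hle _)
        have hLm : Lcount instr w (v0 + 1) ≤ Lcount instr u' (v0 + 1) :=
          Lcount_mono instr _ (hle _)
        have hcmp : height instr σ w v0 ≤ height instr σ u' v0 := by
          unfold height
          rw [hL, hR]
          push_cast
          omega
        obtain ⟨hws1, hws2⟩ := hws v0 (hmem v0 List.mem_cons_self)
        have hη : height instr σ u' v0 = 1 := by omega
        have hm0 : (m : ℤ) + 1 = 1 := by omega
        have hsleep : instr v0 (w v0) = Instr.sleep := by rw [heq]; exact hws2 hη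
        have := (hInv v0).1 ⟨hsleep, by omega⟩
        rw [hc] at this
        exact SiteState.noConfusion this
    have hle' : ∀ v, Function.update w v0 (w v0 + 1) v ≤ u' v := by
      intro v
      by_cases h : v = v0
      · subst h; rw [Function.update_self]; omega
      · rw [Function.update_of_ne h]; exact hle v
    have := ih (applyInstr c v0 (instr v0 (w v0 + 1))) (Function.update w v0 (w v0 + 1))
      (inv_step instr σ c w v0 hInv m hc) hle'
      (fun v hv => hmem v (List.mem_cons_of_mem _ hv)) hlegal' v
    simpa [run] using this

lemma run_outside (l : List ℤ) (p : (ℤ → SiteState) × (ℤ → ℕ)) (v : ℤ) (hv : v ∉ l) :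
    (run instr l p).2 v = p.2 v := by
  induction l generalizing p with
  | nil => rfl
  | cons v0 l ih =>
      have hne : v ≠ v0 := fun h => hv (h ▸ List.mem_cons_self (a := v0) (l := l))
      have hv' : v ∉ l := fun h => hv (List.mem_cons_of_mem _ h)
      rw [run, ih _ hv']
      exact Function.update_of_ne hne _ _

lemma Icc_int_insert (a b : ℤ) (hab : a ≤ b + 1) :
    Finset.Icc a (b + 1) = insert (b + 1) (Finset.Icc a b) := by
  ext i; simp only [Finset.mem_Icc, Finset.mem_insert]; omega

lemma tele1 (f : ℤ → ℤ) (a b : ℤ) (hab : a ≤ b) :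
    ∑ v ∈ Finset.Icc a b, (f (v - 1) - f v) = f (a - 1) - f b := by
  refine Int.le_induction
    (motive := fun b _ => ∑ v ∈ Finset.Icc a b, (f (v - 1) - f v) = f (a - 1) - f b) ?_ ?_ b hab
  · simp
  · intro b hb ih
    rw [Icc_int_insert a b (by omega), Finset.sum_insert (by simp), ih]
    have hB : b + 1 - 1 = b := by ring
    rw [hB]; ring

lemma tele2 (f : ℤ → ℤ) (a b : ℤ) (hab : a ≤ b) :
    ∑ v ∈ Finset.Icc a b, (f (v + 1) - f v) = f (b + 1) - f a := by
  refine Int.le_induction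
    (motive := fun b _ => ∑ v ∈ Finset.Icc a b, (f (v + 1) - f v) = f (b + 1) - f a) ?_ ?_ b hab
  · simp
  · intro b hb ih
    rw [Icc_int_insert a b (by omega), Finset.sum_insert (by simp), ih]
    ring

lemma height_sum (u : ℤ → ℕ) (a b : ℤ) (hab : a ≤ b)
    (hsupp : ∀ v : ℤ, v ∉ Finset.Icc a b → u v = 0) :
    (∑ v ∈ Finset.Icc a b, height instr σ u v) =
      (∑ v ∈ Finset.Icc a b, (σ v : ℤ)) - (Lcount instr u a : ℤ) - (Rcount instr u b : ℤ) := by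
  have hre : ∀ v ∈ Finset.Icc a b, height instr σ u v =
      (σ v : ℤ) + ((Rcount instr u (v - 1) : ℤ) - (Rcount instr u v : ℤ))
        + ((Lcount instr u (v + 1) : ℤ) - (Lcount instr u v : ℤ)) := by
    intro v _; unfold height; ring
  rw [Finset.sum_congr rfl hre, Finset.sum_add_distrib, Finset.sum_add_distrib,
    tele1 (fun v => (Rcount instr u v : ℤ)) a b hab,
    tele2 (fun v => (Lcount instr u v : ℤ)) a b hab]
  have h1 : Rcount instr u (a - 1) = 0 :=
    Rcount_zero instr (hsupp _ (by simp only [Finset.mem_Icc]; omega))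
  have h2 : Lcount instr u (b + 1) = 0 :=
    Lcount_zero instr (hsupp _ (by simp only [Finset.mem_Icc]; omega))
  rw [h1, h2]
  push_cast
  ring

end Helpers

/-- Lemma 2.4 (`lem:dual.lap`): if `u'` is an odometer supported on `[a,b]`
and weakly stable on `[a,b]` for an initial configuration `σ` with no sleeping
particles, then the number of particles it leaves on `[a,b]`, namely
`∑_{v=a}^{b} h(v)`, equals `∑_{v=a}^{b} |σ v| − L_{u'}(a) − R_{u'}(b)`; moreover
the true odometer stabilizing `[a,b]` (the odometer of any legal toppling
sequence within `[a,b]` stabilizing `[a,b]`) leaves at least as many particles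
on `[a,b]` as `u'` does. -/
theorem true_odometer_leaves_most_particles (instr : ℤ → ℕ → Instr)
    (hinstr0 : ∀ v, instr v 0 = Instr.left)
    (σ : ℤ → ℕ) (a b : ℤ) (hab : a ≤ b)
    (u' : ℤ → ℕ) (hsupp : ∀ v : ℤ, v ∉ Finset.Icc a b → u' v = 0)
    (hws : ∀ v ∈ Finset.Icc a b, WeaklyStableAt instr σ u' v)
    (l : List ℤ) (hl : ∀ v ∈ l, v ∈ Finset.Icc a b)
    (hlegal : Legal instr l (fun v => SiteState.active (σ v), fun _ => 0))
    (hstab : StableOn (run instr l (fun v => SiteState.active (σ v), fun _ => 0)).1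
      (Finset.Icc a b)) :
    (∑ v ∈ Finset.Icc a b, height instr σ u' v) =
        (∑ v ∈ Finset.Icc a b, (σ v : ℤ)) - (Lcount instr u' a : ℤ)
          - (Rcount instr u' b : ℤ) ∧
    (∑ v ∈ Finset.Icc a b, height instr σ u' v) ≤
        ∑ v ∈ Finset.Icc a b,
          height instr σ (run instr l (fun v => SiteState.active (σ v), fun _ => 0)).2 v := by
  set u := (run instr l (fun v => SiteState.active (σ v), fun _ => 0)).2 with hu
  have husupp : ∀ v : ℤ, v ∉ Finset.Icc a b → u v = 0 := by
    intro v hv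
    rw [hu, run_outside instr l _ v (fun h => hv (hl v h))]
  have hInv0 : ConfInv instr σ (fun v => SiteState.active (σ v)) (fun _ => 0) := by
    intro v
    have hh : height instr σ (fun _ => 0) v = (σ v : ℤ) := by
      unfold height
      rw [Lcount_zero instr rfl, Rcount_zero instr rfl, Lcount_zero instr rfl,
        Rcount_zero instr rfl]
      push_cast; ring
    refine ⟨fun h => absurd h.1 (by rw [hinstr0 v]; simp), fun _ => ?_, fun h => ?_⟩
    · rw [hh]; exact ⟨by simp, by positivity⟩
    · rw [hinstr0 v] at h; exact absurd h (by simp)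
  have hle : ∀ v, u v ≤ u' v :=
    run_le instr σ u' a b hws l _ _ hInv0 (fun v => Nat.zero_le _) hl hlegal
  have h1 := height_sum instr σ u' a b hab hsupp
  have h2 := height_sum instr σ u a b hab husupp
  refine ⟨h1, ?_⟩
  rw [h1, h2]
  have hLa : Lcount instr u a ≤ Lcount instr u' a := Lcount_mono instr a (hle a)
  have hRb : Rcount instr u b ≤ Rcount instr u' b := Rcount_mono instr b (hle b)
  omega
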